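/- There exists a constant C > 0 such that for every integer l ≥ 1, every λ > 0, every s ∈ {0,1,…,⌈log₂(l+1)⌉} and every pair of points x, y ∈ Q_l, one has (1/l²) Σ_{k ∈ A_s} (e^D_k(x) − e^D_k(y))² / (ζ_k + λ)² ≤ C · 2^{−4s} / (λ + 2^{−2s})² · ‖x − y‖₂². (This quantity is the variance of the increment ḡ^λ_{x,A_s} − ḡ^λ_{y,A_s} of the annulus component of the massive Gaussian field when the α̂(k) are independent standard Gaussians.) -/

import Mathlib

open Finset
open scoped Classical

/-- The momentum `k = (π j₁/(l+1), π j₂/(l+1))` for `j ∈ {1,…,l}²`. -/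
noncomputable def kvec (l : ℕ) (j : ℕ × ℕ) : ℝ × ℝ :=
  (Real.pi * j.1 / (l + 1), Real.pi * j.2 / (l + 1))

/-- Dirichlet eigenfunction `e^D_k(x) = 2 sin(k₁x₁) sin(k₂x₂)`. -/
noncomputable def eD (l : ℕ) (j : ℕ × ℕ) (x : ℤ × ℤ) : ℝ :=
  2 * Real.sin ((kvec l j).1 * x.1) * Real.sin ((kvec l j).2 * x.2)

/-- Eigenvalue `ζ_k = 4(sin²(k₁/2) + sin²(k₂/2))`. -/
noncomputable def zeta (l : ℕ) (j : ℕ × ℕ) : ℝ :=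
  4 * (Real.sin ((kvec l j).1 / 2) ^ 2 + Real.sin ((kvec l j).2 / 2) ^ 2)

/-- The dyadic momentum annulus
`A_s = {k ∈ Λ*_l : π 2^{−(1+s)} ≤ ‖k‖₂ ≤ π 2^{−s}}`, indexed by `j ∈ {1,…,l}²`. -/
noncomputable def annulus (l s : ℕ) : Finset (ℕ × ℕ) :=
  (Finset.Icc 1 l ×ˢ Finset.Icc 1 l).filter fun j =>
    Real.pi * (2 : ℝ) ^ (-(1 + (s : ℤ))) ≤
        Real.sqrt ((kvec l j).1 ^ 2 + (kvec l j).2 ^ 2) ∧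
      Real.sqrt ((kvec l j).1 ^ 2 + (kvec l j).2 ^ 2) ≤ Real.pi * (2 : ℝ) ^ (-(s : ℤ))

lemma kvec_fst (l : ℕ) (j : ℕ × ℕ) : (kvec l j).1 = Real.pi * j.1 / (l + 1) := rfl

lemma kvec_snd (l : ℕ) (j : ℕ × ℕ) : (kvec l j).2 = Real.pi * j.2 / (l + 1) := rfl

lemma sin_lip (a b : ℝ) : |Real.sin a - Real.sin b| ≤ |a - b| := by
  rw [Real.sin_sub_sin]
  calc |2 * Real.sin ((a - b) / 2) * Real.cos ((a + b) / 2)|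
      = 2 * |Real.sin ((a - b) / 2)| * |Real.cos ((a + b) / 2)| := by
        rw [abs_mul, abs_mul]; norm_num
    _ ≤ 2 * |(a - b) / 2| * 1 := by
        apply mul_le_mul
        · have := Real.abs_sin_le_abs (x := (a - b) / 2)
          nlinarith [abs_nonneg (Real.sin ((a - b) / 2))]
        · exact Real.abs_cos_le_one _
        · exact abs_nonneg _
        · positivity
    _ = |a - b| := by rw [abs_div, abs_two]; ring

lemma sq_sin_sub_sin (a b : ℝ) : (Real.sin a - Real.sin b) ^ 2 ≤ (a - b) ^ 2 := by
  have h := sin_lip a b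
  nlinarith [abs_nonneg (Real.sin a - Real.sin b), sq_abs (Real.sin a - Real.sin b),
    sq_abs (a - b)]

lemma key_sq (a b u1 u2 v1 v2 : ℝ) :
    (2 * Real.sin (a * u1) * Real.sin (b * u2) - 2 * Real.sin (a * v1) * Real.sin (b * v2)) ^ 2
      ≤ 8 * ((a * u1 - a * v1) ^ 2 + (b * u2 - b * v2) ^ 2) := by
  set P := Real.sin (a * u1)
  set P' := Real.sin (a * v1)
  set Q := Real.sin (b * u2)
  set Q' := Real.sin (b * v2)
  have h1 : (P - P') ^ 2 ≤ (a * u1 - a * v1) ^ 2 := sq_sin_sub_sin _ _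
  have h2 : (Q - Q') ^ 2 ≤ (b * u2 - b * v2) ^ 2 := sq_sin_sub_sin _ _
  have hp : P' ^ 2 ≤ 1 := Real.sin_sq_le_one _
  have hq : Q ^ 2 ≤ 1 := Real.sin_sq_le_one _
  nlinarith [sq_nonneg ((P - P') * Q - P' * (Q - Q')), sq_nonneg (P - P'), sq_nonneg (Q - Q'),
    mul_nonneg (sq_nonneg (P - P')) (sub_nonneg.2 hq),
    mul_nonneg (sq_nonneg (Q - Q')) (sub_nonneg.2 hp)]

set_option maxHeartbeats 2000000 in
/-- Variance bound for increments of the annulus component of the massive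
Gaussian field:
`(1/l²) Σ_{k∈A_s} (e^D_k(x)−e^D_k(y))²/(ζ_k+λ)² ≤ C 2^{−4s}/(λ+2^{−2s})² ‖x−y‖₂²`. -/
theorem stmt6 :
    ∃ C : ℝ, 0 < C ∧
      ∀ l : ℕ, 1 ≤ l → ∀ lam : ℝ, 0 < lam →
        ∀ s : ℕ, s ≤ ⌈Real.logb 2 ((l : ℝ) + 1)⌉₊ →
          ∀ x ∈ Finset.Icc (1 : ℤ) (l : ℤ) ×ˢ Finset.Icc (1 : ℤ) (l : ℤ),
            ∀ y ∈ Finset.Icc (1 : ℤ) (l : ℤ) ×ˢ Finset.Icc (1 : ℤ) (l : ℤ),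
              (1 / (l : ℝ) ^ 2) *
                  ∑ j ∈ annulus l s, (eD l j x - eD l j y) ^ 2 / (zeta l j + lam) ^ 2
                ≤ C * (2 : ℝ) ^ (-(4 * (s : ℤ))) / (lam + (2 : ℝ) ^ (-(2 * (s : ℤ)))) ^ 2 *
                  (((x.1 - y.1 : ℤ) : ℝ) ^ 2 + ((x.2 - y.2 : ℤ) : ℝ) ^ 2) := by
  refine ⟨32 * Real.pi ^ 2, by positivity, ?_⟩
  intro l hl lam hlam s _ x _ y _
  set D : ℝ := ((x.1 - y.1 : ℤ) : ℝ) ^ 2 + ((x.2 - y.2 : ℤ) : ℝ) ^ 2 with hD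
  have hD0 : 0 ≤ D := by positivity
  set r : ℝ := (2 : ℝ) ^ (-(2 * (s : ℤ))) with hr
  have hr0 : 0 < r := by rw [hr]; positivity
  have hrsq : ((2 : ℝ) ^ (-(s : ℤ))) ^ 2 = r := by
    rw [hr, ← zpow_natCast ((2:ℝ) ^ (-(s:ℤ))) 2, ← zpow_mul]
    congr 1; push_cast; ring
  have hr4 : (2 : ℝ) ^ (-(4 * (s : ℤ))) = r ^ 2 := by
    rw [hr, ← zpow_natCast ((2:ℝ) ^ (-(2*(s:ℤ)))) 2, ← zpow_mul]
    congr 1; push_cast; ring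
  have hdne : lam + r ≠ 0 := by positivity
  set T : ℝ := 8 * Real.pi ^ 2 * r * D / (lam + r) ^ 2 with hT
  have hden0 : (0:ℝ) < (lam + r) ^ 2 := by positivity
  have hterm : ∀ j ∈ annulus l s,
      (eD l j x - eD l j y) ^ 2 / (zeta l j + lam) ^ 2 ≤ T := by
    intro j hj
    simp only [annulus, Finset.mem_filter, Finset.mem_product, Finset.mem_Icc] at hj
    obtain ⟨⟨⟨hj11, hj12⟩, ⟨hj21, hj22⟩⟩, hlo, hhi⟩ := hj
    set a := (kvec l j).1 with ha
    set b := (kvec l j).2 with hb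
    have ha0 : 0 ≤ a := by rw [ha, kvec_fst]; positivity
    have hb0 : 0 ≤ b := by rw [hb, kvec_snd]; positivity
    have hS0 : 0 ≤ a ^ 2 + b ^ 2 := by positivity
    have hsqrt := Real.sq_sqrt hS0
    have hup : a ^ 2 + b ^ 2 ≤ Real.pi ^ 2 * r := by
      have h1 : a ^ 2 + b ^ 2 ≤ (Real.pi * (2:ℝ) ^ (-(s:ℤ))) ^ 2 := by
        have h := pow_le_pow_left₀ (Real.sqrt_nonneg (a ^ 2 + b ^ 2)) hhi 2
        rwa [hsqrt] at h
      calc a ^ 2 + b ^ 2 ≤ (Real.pi * (2:ℝ) ^ (-(s:ℤ))) ^ 2 := h1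
        _ = Real.pi ^ 2 * r := by rw [mul_pow, hrsq]
    have hlow : Real.pi ^ 2 * r / 4 ≤ a ^ 2 + b ^ 2 := by
      have h1 : (Real.pi * (2:ℝ) ^ (-(1 + (s:ℤ)))) ^ 2 ≤ a ^ 2 + b ^ 2 := by
        have h := pow_le_pow_left₀
          (show (0:ℝ) ≤ Real.pi * (2:ℝ) ^ (-(1 + (s:ℤ))) from by positivity) hlo 2
        rwa [hsqrt] at h
      have h2 : ((2:ℝ) ^ (-(1 + (s:ℤ)))) ^ 2 = r / 4 := by
        rw [← zpow_natCast ((2:ℝ) ^ (-(1+(s:ℤ)))) 2, ← zpow_mul,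
          show (-(1 + (s:ℤ))) * ((2:ℕ):ℤ) = (-(2 * (s:ℤ))) - 2 by push_cast; ring,
          zpow_sub₀ (two_ne_zero), hr]
        norm_num
      calc Real.pi ^ 2 * r / 4 = (Real.pi * (2:ℝ) ^ (-(1 + (s:ℤ)))) ^ 2 := by
            rw [mul_pow, h2]; ring
        _ ≤ a ^ 2 + b ^ 2 := h1
    have hjl1 : (j.1 : ℝ) ≤ (l:ℝ) + 1 := by
      have : (j.1:ℝ) ≤ (l:ℝ) := by exact_mod_cast hj12
      linarith
    have hjl2 : (j.2 : ℝ) ≤ (l:ℝ) + 1 := by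
      have : (j.2:ℝ) ≤ (l:ℝ) := by exact_mod_cast hj22
      linarith
    have hapi : a ≤ Real.pi := by
      rw [ha, kvec_fst, div_le_iff₀ (by positivity)]
      exact mul_le_mul_of_nonneg_left hjl1 Real.pi_pos.le
    have hbpi : b ≤ Real.pi := by
      rw [hb, kvec_snd, div_le_iff₀ (by positivity)]
      exact mul_le_mul_of_nonneg_left hjl2 Real.pi_pos.le
    have hzeta : r ≤ zeta l j := by
      have hsa : a / Real.pi ≤ Real.sin (a / 2) := by
        have h := Real.mul_le_sin (x := a / 2) (by linarith) (by linarith)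
        calc a / Real.pi = 2 / Real.pi * (a / 2) := by field_simp
          _ ≤ Real.sin (a / 2) := h
      have hsb : b / Real.pi ≤ Real.sin (b / 2) := by
        have h := Real.mul_le_sin (x := b / 2) (by linarith) (by linarith)
        calc b / Real.pi = 2 / Real.pi * (b / 2) := by field_simp
          _ ≤ Real.sin (b / 2) := h
      have hsa2 : (a / Real.pi) ^ 2 ≤ Real.sin (a / 2) ^ 2 :=
        pow_le_pow_left₀ (by positivity) hsa 2
      have hsb2 : (b / Real.pi) ^ 2 ≤ Real.sin (b / 2) ^ 2 :=
        pow_le_pow_left₀ (by positivity) hsb 2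
      have hpi0 : (0:ℝ) < Real.pi ^ 2 := by positivity
      have hdiv : (a / Real.pi) ^ 2 + (b / Real.pi) ^ 2 = (a ^ 2 + b ^ 2) / Real.pi ^ 2 := by
        field_simp
      have hge : r ≤ 4 * ((a ^ 2 + b ^ 2) / Real.pi ^ 2) := by
        rw [show 4 * ((a ^ 2 + b ^ 2) / Real.pi ^ 2) = 4 * (a ^ 2 + b ^ 2) / Real.pi ^ 2
          from by ring, le_div_iff₀ hpi0]
        linarith
      unfold zeta
      rw [← ha, ← hb]
      linarith [hsa2, hsb2, hdiv, hge]
    have hnum : (eD l j x - eD l j y) ^ 2 ≤ 8 * Real.pi ^ 2 * r * D := by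
      have hk := key_sq a b (x.1:ℝ) (x.2:ℝ) (y.1:ℝ) (y.2:ℝ)
      have hd1 : ((x.1 - y.1 : ℤ) : ℝ) = (x.1:ℝ) - (y.1:ℝ) := by push_cast; ring
      have hd2 : ((x.2 - y.2 : ℤ) : ℝ) = (x.2:ℝ) - (y.2:ℝ) := by push_cast; ring
      have heq : eD l j x - eD l j y
          = 2 * Real.sin (a * (x.1:ℝ)) * Real.sin (b * (x.2:ℝ))
            - 2 * Real.sin (a * (y.1:ℝ)) * Real.sin (b * (y.2:ℝ)) := by
        unfold eD; rw [← ha, ← hb]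
      rw [heq]
      have hexp : (a * (x.1:ℝ) - a * (y.1:ℝ)) ^ 2 + (b * (x.2:ℝ) - b * (y.2:ℝ)) ^ 2
          = a ^ 2 * ((x.1:ℝ) - (y.1:ℝ)) ^ 2 + b ^ 2 * ((x.2:ℝ) - (y.2:ℝ)) ^ 2 := by ring
      have hprod : a ^ 2 * ((x.1:ℝ) - (y.1:ℝ)) ^ 2 + b ^ 2 * ((x.2:ℝ) - (y.2:ℝ)) ^ 2
          ≤ (a ^ 2 + b ^ 2) * D := by
        rw [hD, hd1, hd2]
        nlinarith [sq_nonneg ((x.1:ℝ) - (y.1:ℝ)), sq_nonneg ((x.2:ℝ) - (y.2:ℝ)),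
          sq_nonneg a, sq_nonneg b]
      calc (2 * Real.sin (a * (x.1:ℝ)) * Real.sin (b * (x.2:ℝ))
            - 2 * Real.sin (a * (y.1:ℝ)) * Real.sin (b * (y.2:ℝ))) ^ 2
          ≤ 8 * ((a * (x.1:ℝ) - a * (y.1:ℝ)) ^ 2 + (b * (x.2:ℝ) - b * (y.2:ℝ)) ^ 2) := hk
        _ ≤ 8 * ((a ^ 2 + b ^ 2) * D) := by rw [hexp]; linarith
        _ ≤ 8 * (Real.pi ^ 2 * r * D) := by
            have := mul_le_mul_of_nonneg_right hup hD0
            linarith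
        _ = 8 * Real.pi ^ 2 * r * D := by ring
    have hdenle : (lam + r) ^ 2 ≤ (zeta l j + lam) ^ 2 :=
      pow_le_pow_left₀ (by positivity) (by linarith) 2
    rw [hT]
    exact div_le_div₀ (by positivity) hnum hden0 hdenle
  have hl1 : (0:ℝ) < (l:ℝ) := by exact_mod_cast Nat.pos_of_ne_zero (by omega)
  set m : ℕ := (l + 1) / 2 ^ s with hm
  have hsub : annulus l s ⊆ Finset.Icc 1 m ×ˢ Finset.Icc 1 m := by
    intro j hj
    simp only [annulus, Finset.mem_filter, Finset.mem_product, Finset.mem_Icc] at hj ⊢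
    obtain ⟨⟨⟨hj11, hj12⟩, ⟨hj21, hj22⟩⟩, hlo, hhi⟩ := hj
    set a := (kvec l j).1 with ha
    set b := (kvec l j).2 with hb
    have ha0 : 0 ≤ a := by rw [ha, kvec_fst]; positivity
    have hb0 : 0 ≤ b := by rw [hb, kvec_snd]; positivity
    have hS0 : 0 ≤ a ^ 2 + b ^ 2 := by positivity
    have hsqrt := Real.sq_sqrt hS0
    have hpos : (0:ℝ) < Real.pi * (2:ℝ) ^ (-(s:ℤ)) := by positivity
    have haup : a ≤ Real.pi * (2:ℝ) ^ (-(s:ℤ)) := by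
      calc a = Real.sqrt (a ^ 2) := (Real.sqrt_sq ha0).symm
        _ ≤ Real.sqrt (a ^ 2 + b ^ 2) := Real.sqrt_le_sqrt (by nlinarith [sq_nonneg b])
        _ ≤ Real.pi * (2:ℝ) ^ (-(s:ℤ)) := hhi
    have hbup : b ≤ Real.pi * (2:ℝ) ^ (-(s:ℤ)) := by
      calc b = Real.sqrt (b ^ 2) := (Real.sqrt_sq hb0).symm
        _ ≤ Real.sqrt (a ^ 2 + b ^ 2) := Real.sqrt_le_sqrt (by nlinarith [sq_nonneg a])
        _ ≤ Real.pi * (2:ℝ) ^ (-(s:ℤ)) := hhi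
    have key : ∀ n : ℕ, Real.pi * n / ((l:ℝ) + 1) ≤ Real.pi * (2:ℝ) ^ (-(s:ℤ)) → n ≤ m := by
      intro n hle
      rw [hm, Nat.le_div_iff_mul_le (Nat.pow_pos (by norm_num))]
      have hl1' : (0:ℝ) < (l:ℝ) + 1 := by positivity
      have hpip := Real.pi_pos
      rw [div_le_iff₀ hl1', mul_assoc] at hle
      have h6 : (n:ℝ) ≤ (2:ℝ)^(-(s:ℤ)) * ((l:ℝ)+1) := (mul_le_mul_iff_of_pos_left hpip).1 hle
      have h2sp : (0:ℝ) < (2:ℝ)^s := by positivity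
      have h2s : ((2:ℝ) ^ (-(s:ℤ))) * (2:ℝ)^s = 1 := by
        rw [← zpow_natCast (2:ℝ) s, ← zpow_add₀ (two_ne_zero)]; simp
      have hre : (n:ℝ) * (2:ℝ)^s ≤ (l:ℝ) + 1 := by
        calc (n:ℝ) * (2:ℝ)^s ≤ ((2:ℝ)^(-(s:ℤ)) * ((l:ℝ)+1)) * (2:ℝ)^s :=
              mul_le_mul_of_nonneg_right h6 h2sp.le
          _ = ((l:ℝ)+1) * (((2:ℝ)^(-(s:ℤ))) * (2:ℝ)^s) := by ring
          _ = (l:ℝ)+1 := by rw [h2s, mul_one]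
      have : ((n * 2 ^ s : ℕ) : ℝ) ≤ ((l + 1 : ℕ) : ℝ) := by push_cast; linarith
      exact_mod_cast this
    refine ⟨⟨hj11, key j.1 ?_⟩, ⟨hj21, key j.2 ?_⟩⟩
    · rw [ha, kvec_fst] at haup; exact haup
    · rw [hb, kvec_snd] at hbup; exact hbup
  have hcard : (annulus l s).card ≤ m * m := by
    calc (annulus l s).card ≤ (Finset.Icc 1 m ×ˢ Finset.Icc 1 m).card :=
          Finset.card_le_card hsub
      _ = (Finset.Icc 1 m).card * (Finset.Icc 1 m).card := Finset.card_product _ _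
      _ ≤ m * m := by rw [Nat.card_Icc]; simp
  have hmR : (m:ℝ) ≤ 2 * l * (2:ℝ) ^ (-(s:ℤ)) := by
    have h1 : (m:ℝ) ≤ ((l+1 : ℕ):ℝ) / ((2^s : ℕ):ℝ) := Nat.cast_div_le
    have h2sp : (0:ℝ) < ((2^s : ℕ):ℝ) := by positivity
    have h2 : ((l+1 : ℕ):ℝ) ≤ 2 * l := by
      push_cast
      have : (1:ℝ) ≤ (l:ℝ) := by exact_mod_cast hl
      linarith
    have h3 : ((l+1 : ℕ):ℝ) / ((2^s : ℕ):ℝ) ≤ 2 * (l:ℝ) / ((2^s : ℕ):ℝ) :=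
      div_le_div_of_nonneg_right h2 h2sp.le
    have h4 : 2 * (l:ℝ) / ((2^s : ℕ):ℝ) = 2 * l * (2:ℝ) ^ (-(s:ℤ)) := by
      rw [zpow_neg, zpow_natCast]
      push_cast
      field_simp
    linarith
  have hT0 : 0 ≤ T := by rw [hT]; positivity
  have hcardR : ((annulus l s).card : ℝ) ≤ 4 * (l:ℝ)^2 * r := by
    have h1 : ((annulus l s).card : ℝ) ≤ (m:ℝ) * m := by exact_mod_cast hcard
    have h2 : (m:ℝ) * m ≤ (2 * l * (2:ℝ)^(-(s:ℤ))) * (2 * l * (2:ℝ)^(-(s:ℤ))) :=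
      mul_le_mul hmR hmR (Nat.cast_nonneg m) (by positivity)
    have h3 : (2 * (l:ℝ) * (2:ℝ)^(-(s:ℤ))) * (2 * l * (2:ℝ)^(-(s:ℤ))) = 4 * (l:ℝ)^2 * r := by
      rw [← hrsq]; ring
    linarith
  have hsum : ∑ j ∈ annulus l s, (eD l j x - eD l j y) ^ 2 / (zeta l j + lam) ^ 2
      ≤ 4 * (l:ℝ)^2 * r * T := by
    have h1 := Finset.sum_le_card_nsmul (annulus l s)
      (fun j => (eD l j x - eD l j y) ^ 2 / (zeta l j + lam) ^ 2) T hterm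
    rw [nsmul_eq_mul] at h1
    have h2 : ((annulus l s).card : ℝ) * T ≤ 4 * (l:ℝ)^2 * r * T :=
      mul_le_mul_of_nonneg_right hcardR hT0
    linarith
  have hlne : ((l:ℝ))^2 ≠ 0 := by positivity
  calc (1 / (l : ℝ) ^ 2) *
          ∑ j ∈ annulus l s, (eD l j x - eD l j y) ^ 2 / (zeta l j + lam) ^ 2
      ≤ (1 / (l : ℝ) ^ 2) * (4 * (l:ℝ)^2 * r * T) := by
        apply mul_le_mul_of_nonneg_left hsum (by positivity)
    _ = 32 * Real.pi ^ 2 * r ^ 2 / (lam + r) ^ 2 * D := by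
        rw [hT]; field_simp; ring
    _ = 32 * Real.pi ^ 2 * (2 : ℝ) ^ (-(4 * (s : ℤ))) / (lam + r) ^ 2 * D := by
        rw [hr4]
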